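/- Let f : ℝⁿ × ℝ → ℝⁿ be continuously differentiable in its first (state) variable and continuous in its second (time) variable, let δ : ℝ → ℝⁿ be continuous, let α : [t₀,∞) → ℝ be continuous, and let α₀ > 0. Assume: (A1) for all x ∈ ℝⁿ, all t ≥ t₀, and all v ∈ ℝⁿ, ⟪Dₓf(x,t) v, v⟫ ≤ −α(t) ‖v‖² and α(t) ≥ α₀; and (A2) ‖f(0,t) + δ(t)‖ / α(t) → 0 as t → ∞. Then every differentiable x : [t₀,∞) → ℝⁿ satisfying x'(t) = f(x(t), t) + δ(t) for all t ≥ t₀ converges to 0 as t → ∞. -/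

import Mathlib

open Filter Topology Set
open scoped RealInnerProductSpace

lemma key_diss {n : ℕ} (g : EuclideanSpace ℝ (Fin n) → EuclideanSpace ℝ (Fin n))
    (hg : ContDiff ℝ 1 g) (a : ℝ)
    (hb : ∀ z v : EuclideanSpace ℝ (Fin n), ⟪fderiv ℝ g z v, v⟫ ≤ -a * ‖v‖ ^ 2)
    (y : EuclideanSpace ℝ (Fin n)) :
    ⟪g y, y⟫ ≤ ⟪g 0, y⟫ - a * ‖y‖ ^ 2 := by
  set h : ℝ → ℝ := fun s => ⟪g (s • y), y⟫ with hh
  have hderiv : ∀ s : ℝ, HasDerivAt h (⟪fderiv ℝ g (s • y) y, y⟫) s := by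
    intro s
    have h1 : HasDerivAt (fun s : ℝ => s • y) y s := by
      simpa using (hasDerivAt_id s).smul_const y
    have h2 : HasFDerivAt g (fderiv ℝ g (s • y)) (s • y) :=
      ((hg.differentiable one_ne_zero) (s • y)).hasFDerivAt
    have h3 : HasDerivAt (fun s : ℝ => g (s • y)) (fderiv ℝ g (s • y) y) s :=
      h2.comp_hasDerivAt s h1
    have h4 := h3.inner ℝ (hasDerivAt_const s y)
    simpa [inner_zero_right] using h4
  obtain ⟨c, -, hc⟩ := exists_hasDerivAt_eq_slope h
    (fun s => ⟪fderiv ℝ g (s • y) y, y⟫) (by norm_num : (0:ℝ) < 1)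
    (fun s _ => (hderiv s).continuousAt.continuousWithinAt)
    (fun s _ => hderiv s)
  have h1 : h 1 = ⟪g y, y⟫ := by simp [hh]
  have h0 : h 0 = ⟪g 0, y⟫ := by simp [hh]
  have := hb (c • y) y
  rw [h1, h0] at hc
  simp only [sub_zero, div_one] at hc
  linarith [hc ▸ this]

theorem all_solutions_tendsto_zero {n : ℕ} (hn : 1 ≤ n) (t₀ : ℝ)
    (f : EuclideanSpace ℝ (Fin n) → ℝ → EuclideanSpace ℝ (Fin n))
    (δ : ℝ → EuclideanSpace ℝ (Fin n))
    (hf : ∀ t, t₀ ≤ t → ContDiff ℝ 1 (fun y => f y t))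
    (hft : ∀ y, ContinuousOn (fun t => f y t) (Set.Ici t₀))
    (hδ : Continuous δ)
    (α : ℝ → ℝ) (hα : ContinuousOn α (Set.Ici t₀))
    (α₀ : ℝ) (hα₀ : 0 < α₀)
    (hA1 : ∀ (x : EuclideanSpace ℝ (Fin n)) (t : ℝ), t₀ ≤ t →
      (∀ v : EuclideanSpace ℝ (Fin n),
        ⟪fderiv ℝ (fun y => f y t) x v, v⟫ ≤ -α t * ‖v‖ ^ 2) ∧ α₀ ≤ α t)
    (hA2 : Tendsto (fun t => ‖f 0 t + δ t‖ / α t) atTop (𝓝 0))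
    (x : ℝ → EuclideanSpace ℝ (Fin n))
    (hx : ∀ t, t₀ ≤ t → HasDerivAt x (f (x t) t + δ t) t) :
    Tendsto x atTop (𝓝 0) := by
  rw [NormedAddCommGroup.tendsto_nhds_zero]
  intro ε hε
  set e := ε / 2 with hedef
  have he0 : 0 < e := by positivity
  -- choose T beyond which ‖f 0 t + δ t‖ ≤ (e/2) α t
  have hev : ∀ᶠ t in atTop, ‖f 0 t + δ t‖ / α t < e / 2 :=
    hA2.eventually (eventually_lt_nhds (by positivity))
  obtain ⟨T₁, hT₁⟩ := (hev.and (eventually_ge_atTop t₀)).exists_forall_of_atTop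
  set T := max T₁ t₀ with hT
  have hTt₀ : t₀ ≤ T := le_max_right _ _
  have hbnd : ∀ t, T ≤ t → ‖f 0 t + δ t‖ ≤ e / 2 * α t := by
    intro t ht
    have h1 := hT₁ t (le_trans (le_max_left _ _) ht)
    have hαt : 0 < α t := lt_of_lt_of_le hα₀ (hA1 0 t (le_trans hTt₀ ht)).2
    have := (div_lt_iff₀ hαt).1 h1.1
    linarith
  -- the squared norm and its derivative
  set W : ℝ → ℝ := fun t => ⟪x t, x t⟫ with hWdef
  have hWnorm : ∀ t, W t = ‖x t‖ ^ 2 := fun t => real_inner_self_eq_norm_sq _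
  have hW' : ∀ t, t₀ ≤ t → HasDerivAt W (2 * ⟪f (x t) t + δ t, x t⟫) t := by
    intro t ht
    have := (hx t ht).inner ℝ (hx t ht)
    have h2 : ⟪x t, f (x t) t + δ t⟫ + ⟪f (x t) t + δ t, x t⟫
        = 2 * ⟪f (x t) t + δ t, x t⟫ := by
      rw [real_inner_comm]; ring
    rw [h2] at this
    exact this
  set C := max (W T - e ^ 2) 0 with hCdef
  have hC0 : 0 ≤ C := le_max_right _ _
  set B : ℝ → ℝ := fun t => e ^ 2 + C * Real.exp (-α₀ * (t - T)) with hBdef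
  have hB' : ∀ t : ℝ, HasDerivAt B (-α₀ * (C * Real.exp (-α₀ * (t - T)))) t := by
    intro t
    have h1 : HasDerivAt (fun t : ℝ => -α₀ * (t - T)) (-α₀) t := by
      simpa using ((hasDerivAt_id t).sub_const T).const_mul (-α₀)
    have h2 := ((h1.exp).const_mul C).const_add (e ^ 2)
    convert h2 using 1
    any_goals rfl
    ring
  -- comparison
  have key : ∀ u, T ≤ u → W u ≤ B u := by
    intro u hu
    have haT : W T ≤ B T := by
      have : Real.exp (-α₀ * (T - T)) = 1 := by simp
      simp only [hBdef, this, mul_one]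
      have := le_max_left (W T - e ^ 2) 0
      linarith
    refine image_le_of_deriv_right_lt_deriv_boundary
      (f' := fun s => 2 * ⟪f (x s) s + δ s, x s⟫)
      (B' := fun s => -α₀ * (C * Real.exp (-α₀ * (s - T))))
      (fun s hs => ((hW' s (le_trans hTt₀ hs.1)).continuousAt).continuousWithinAt)
      (fun s hs => (hW' s (le_trans hTt₀ hs.1)).hasDerivWithinAt)
      haT (fun s => hB' s) ?_ (Set.right_mem_Icc.2 hu)
    intro s hs hWB
    have hs0 : t₀ ≤ s := le_trans hTt₀ hs.1
    have hexp0 : 0 < Real.exp (-α₀ * (s - T)) := Real.exp_pos _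
    have hWe : e ^ 2 ≤ W s := by
      rw [hWB]
      simp only [hBdef]
      nlinarith
    have hre : e ≤ ‖x s‖ := by
      rw [hWnorm s] at hWe
      exact le_of_pow_le_pow_left₀ two_ne_zero (norm_nonneg _) hWe
    have I1 : ⟪f (x s) s, x s⟫ ≤ ⟪f 0 s, x s⟫ - α s * ‖x s‖ ^ 2 :=
      key_diss (fun y => f y s) (hf s hs0) (α s)
        (fun z v => (hA1 z s hs0).1 v) (x s)
    have I2 : ⟪f 0 s + δ s, x s⟫ ≤ ‖f 0 s + δ s‖ * ‖x s‖ :=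
      real_inner_le_norm _ _
    have I3 : ‖f 0 s + δ s‖ ≤ e / 2 * α s := hbnd s hs.1
    have hαs : α₀ ≤ α s := (hA1 0 s hs0).2
    have hsplit1 : ⟪f (x s) s + δ s, x s⟫ = ⟪f (x s) s, x s⟫ + ⟪δ s, x s⟫ :=
      inner_add_left _ _ _
    have hsplit2 : ⟪f 0 s + δ s, x s⟫ = ⟪f 0 s, x s⟫ + ⟪δ s, x s⟫ :=
      inner_add_left _ _ _
    have hCB : C * Real.exp (-α₀ * (s - T)) = W s - e ^ 2 := by
      rw [hWB]; simp [hBdef]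
    show 2 * ⟪f (x s) s + δ s, x s⟫ < -α₀ * (C * Real.exp (-α₀ * (s - T)))
    rw [hCB]
    have hWs : W s = ‖x s‖ ^ 2 := hWnorm s
    have hr0 : (0:ℝ) ≤ ‖x s‖ := norm_nonneg _
    have hA : 0 < α s := lt_of_lt_of_le hα₀ hαs
    have I2' : ⟪f 0 s, x s⟫ + ⟪δ s, x s⟫ ≤ ‖f 0 s + δ s‖ * ‖x s‖ := hsplit2 ▸ I2
    have step1 : ⟪f (x s) s + δ s, x s⟫
        ≤ e / 2 * α s * ‖x s‖ - α s * ‖x s‖ ^ 2 := by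
      rw [hsplit1]
      have hI3r := mul_le_mul_of_nonneg_right I3 hr0
      linarith
    have step2 : e / 2 * α s * ‖x s‖ ≤ α s * ‖x s‖ ^ 2 / 2 := by
      have h := mul_le_mul_of_nonneg_right
        (mul_le_mul_of_nonneg_left hre hA.le) hr0
      nlinarith
    have step3 : α₀ * ‖x s‖ ^ 2 ≤ α s * ‖x s‖ ^ 2 :=
      mul_le_mul_of_nonneg_right hαs (by positivity)
    have step4 : 0 < α₀ * e ^ 2 := by positivity
    rw [hWs]
    linarith
  -- conclusion
  have hlin : Tendsto (fun u : ℝ => u - T) atTop atTop :=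
    tendsto_atTop_add_const_right atTop (-T) tendsto_id
  have hexp : Tendsto (fun u : ℝ => C * Real.exp (-α₀ * (u - T))) atTop (𝓝 0) := by
    have h1 : Tendsto (fun u : ℝ => -α₀ * (u - T)) atTop atBot :=
      (tendsto_const_mul_atBot_of_neg (by linarith : -α₀ < 0)).2 hlin
    have h2 := Real.tendsto_exp_atBot.comp h1
    have h3 := h2.const_mul C
    simpa using h3
  have hev2 : ∀ᶠ u in atTop, C * Real.exp (-α₀ * (u - T)) < e ^ 2 :=
    hexp.eventually (eventually_lt_nhds (by positivity))
  filter_upwards [hev2, eventually_ge_atTop T] with u h1 h2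
  have h3 := key u h2
  have h4 : W u < 2 * e ^ 2 := by
    simp only [hBdef] at h3
    linarith
  have h5 : ‖x u‖ ^ 2 < ε ^ 2 := by
    rw [← hWnorm u]
    have : 2 * e ^ 2 < ε ^ 2 := by rw [hedef]; nlinarith
    linarith
  exact lt_of_pow_lt_pow_left₀ 2 (le_of_lt hε) h5
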